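/- arXiv:2509.16586 — 15 statements merged into one kernel-verified Lean document; each statement's English description precedes it below -/
import Mathlib

section
/- Let X be a nonempty type and f, g : X → ℝ with f bounded above and 0 ≤ g x ≤ 1 for all x. Fix b' ∈ [0,1], U > 0, ε_l ∈ (0, U), a natural number T ≥ 1, and set η := U / √T. Suppose we are given x_0, …, x_{T−1} ∈ X and λ_0, …, λ_T ∈ [0, U] such that for every t < T: (i) (primal optimality) f x + λ_t · g x ≤ f x_t + λ_t · g x_t for all x ∈ X; and (ii) (approximate projected dual update) |λ_{t+1} − min(U, max(0, λ_t − η · (g x_t − b')))| ≤ ε_l. Suppose x* ∈ X satisfies g x* ≥ b' and f x ≤ f x* for every x with g x ≥ b', and suppose λ* with 0 ≤ λ* < U satisfies the strong-duality inequality f x + λ* · (g x − b') ≤ f x* for all x ∈ X. Finally, suppose x̄ ∈ X satisfies f x̄ = (1/T) ∑_{t<T} f x_t and g x̄ = (1/T) ∑_{t<T} g x_t. Then, setting R := √T · (ε_l² + 2 ε_l U)/(2U) + U/√T, one has f x̄ ≥ f x* − R and g x̄ ≥ b' − R/(U − λ*). -/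
private lemma pd_sq_mono (x y lm : ℝ) (h : lm ≤ x) (hxy : x ≤ y) :
    (x - lm)^2 ≤ (y - lm)^2 := by nlinarith

private lemma pd_sq_anti (x y lm : ℝ) (h : y ≤ lm) (hxy : x ≤ y) :
    (y - lm)^2 ≤ (x - lm)^2 := by nlinarith

private lemma pd_sq_bound (x b η : ℝ) (h1 : 0 ≤ x) (h2 : x ≤ 1)
    (h3 : 0 ≤ b) (h4 : b ≤ 1) : η^2*(x - b)^2 ≤ η^2 := by
  have h5 : (x - b)^2 ≤ 1 := by nlinarith
  nlinarith [sq_nonneg η]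

private lemma pd_diff_sq (x y U : ℝ) (h1 : 0 ≤ x) (h2 : x ≤ U)
    (h3 : 0 ≤ y) (h4 : y ≤ U) : (x - y)^2 ≤ U^2 := by nlinarith

private lemma pd_step_aux (e d εl U : ℝ) (he1 : -εl ≤ e) (he2 : e ≤ εl)
    (hd1 : -U ≤ d) (hd2 : d ≤ U) :
    (d + e)^2 ≤ d^2 + 2*εl*U + εl^2 := by
  nlinarith [mul_nonneg (by linarith : (0:ℝ) ≤ εl - e) (by linarith : (0:ℝ) ≤ U + d),
    mul_nonneg (by linarith : (0:ℝ) ≤ εl + e) (by linarith : (0:ℝ) ≤ U - d),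
    mul_nonneg (by linarith : (0:ℝ) ≤ εl - e) (by linarith : (0:ℝ) ≤ εl + e)]

set_option maxHeartbeats 1000000 in
/-- Guarantees for the primal-dual algorithm (Theorem 3.1), stated for an
abstract constrained maximization problem. -/
theorem primal_dual_guarantee {X : Type*} [Nonempty X] (f g : X → ℝ)
    (hf : BddAbove (Set.range f))
    (hg : ∀ x, 0 ≤ g x ∧ g x ≤ 1)
    (b' : ℝ) (hb' : b' ∈ Set.Icc (0 : ℝ) 1)
    (U : ℝ) (hU : 0 < U)
    (εl : ℝ) (hεl : εl ∈ Set.Ioo 0 U)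
    (T : ℕ) (hT : 1 ≤ T)
    (η : ℝ) (hη : η = U / Real.sqrt T)
    (xs : ℕ → X) (lam : ℕ → ℝ)
    (hlam : ∀ t ≤ T, lam t ∈ Set.Icc 0 U)
    (hprimal : ∀ t < T, ∀ x : X, f x + lam t * g x ≤ f (xs t) + lam t * g (xs t))
    (hdual : ∀ t < T,
      |lam (t + 1) - min U (max 0 (lam t - η * (g (xs t) - b')))| ≤ εl)
    (xstar : X) (hxstar_feas : g xstar ≥ b')
    (hxstar_opt : ∀ x, g x ≥ b' → f x ≤ f xstar)
    (lamstar : ℝ) (hlamstar0 : 0 ≤ lamstar) (hlamstarU : lamstar < U)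
    (hduality : ∀ x, f x + lamstar * (g x - b') ≤ f xstar)
    (xbar : X)
    (hfbar : f xbar = (1 / T : ℝ) * ∑ t ∈ Finset.range T, f (xs t))
    (hgbar : g xbar = (1 / T : ℝ) * ∑ t ∈ Finset.range T, g (xs t))
    (R : ℝ)
    (hR : R = Real.sqrt T * (εl ^ 2 + 2 * εl * U) / (2 * U) + U / Real.sqrt T) :
    f xbar ≥ f xstar - R ∧ g xbar ≥ b' - R / (U - lamstar) := by
  obtain ⟨hεl0, hεlU⟩ := hεl
  have hT0 : (0:ℝ) < T := by exact_mod_cast Nat.pos_of_ne_zero (by omega)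
  have hs0 : 0 < Real.sqrt T := Real.sqrt_pos.mpr hT0
  have hs2 : Real.sqrt T * Real.sqrt T = (T:ℝ) := Real.mul_self_sqrt hT0.le
  have hη0 : 0 < η := by rw [hη]; positivity
  -- per-step dual inequality
  have key : ∀ lm : ℝ, 0 ≤ lm → lm ≤ U → ∀ t < T,
      2*η*((g (xs t) - b')*(lam t - lm)) ≤
        ((lam t - lm)^2 - (lam (t+1) - lm)^2) + η^2*(g (xs t)-b')^2
          + (2*εl*U + εl^2) := by
    intro lm hlm0 hlmU t ht
    obtain ⟨hlt0, hltU⟩ := hlam t ht.le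
    obtain ⟨hlt0', hltU'⟩ := hlam (t+1) (by omega)
    set a := lam t - η*(g (xs t) - b') with ha
    set p := min U (max 0 a) with hp
    have hp0 : 0 ≤ p := le_min hU.le (le_max_left 0 a)
    have hpU : p ≤ U := min_le_left _ _
    have hproj : (p - lm)^2 ≤ (a - lm)^2 := by
      rcases le_total U (max 0 a) with h | h
      · have hpe : p = U := min_eq_left h
        rcases le_total 0 a with h2 | h2
        · rw [max_eq_right h2] at h
          rw [hpe]; exact pd_sq_mono U a lm hlmU h
        · rw [max_eq_left h2] at h
          exact absurd h (by linarith)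
      · have hpe : p = max 0 a := min_eq_right h
        rcases le_total 0 a with h2 | h2
        · rw [hpe, max_eq_right h2]
        · rw [hpe, max_eq_left h2]
          exact pd_sq_anti a 0 lm hlm0 h2
    have hd := hdual t ht
    rw [← ha, ← hp] at hd
    obtain ⟨he1, he2⟩ := abs_le.mp hd
    have hstep : (lam (t+1) - lm)^2 ≤ (p - lm)^2 + 2*εl*U + εl^2 := by
      have haux := pd_step_aux (lam (t+1) - p) (p - lm) εl U
        (by linarith) (by linarith) (by linarith) (by linarith)
      have e : (lam (t+1) - lm)^2 = ((p - lm) + (lam (t+1) - p))^2 := by ring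
      rw [e]; exact haux
    have hexp : (a - lm)^2 = (lam t - lm)^2
        - 2*η*((g (xs t)-b')*(lam t - lm)) + η^2*(g (xs t)-b')^2 := by
      rw [ha]; ring
    linarith
  -- regret bound for the dual player
  have regret : ∀ lm : ℝ, 0 ≤ lm → lm ≤ U →
      ∑ t ∈ Finset.range T, (g (xs t) - b')*(lam t - lm) ≤ (T:ℝ) * R := by
    intro lm hlm0 hlmU
    have hsum : ∑ t ∈ Finset.range T, 2*η*((g (xs t) - b')*(lam t - lm)) ≤
        ∑ t ∈ Finset.range T, (((lam t - lm)^2 - (lam (t+1) - lm)^2)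
          + η^2*(g (xs t)-b')^2 + (2*εl*U + εl^2)) :=
      Finset.sum_le_sum (fun t ht => key lm hlm0 hlmU t (Finset.mem_range.mp ht))
    have h2 : ∑ t ∈ Finset.range T, (((lam t - lm)^2 - (lam (t+1) - lm)^2)
          + η^2*(g (xs t)-b')^2 + (2*εl*U + εl^2))
        = ((lam 0 - lm)^2 - (lam T - lm)^2)
          + ∑ t ∈ Finset.range T, η^2*(g (xs t)-b')^2
          + (T:ℝ)*(2*εl*U + εl^2) := by
      rw [Finset.sum_add_distrib, Finset.sum_add_distrib,
        Finset.sum_range_sub' (fun t => (lam t - lm)^2),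
        Finset.sum_const, Finset.card_range, nsmul_eq_mul]
    have hqb : ∑ t ∈ Finset.range T, η^2*(g (xs t)-b')^2 ≤ (T:ℝ) * η^2 := by
      have hb : ∀ t ∈ Finset.range T, η^2*(g (xs t)-b')^2 ≤ η^2 :=
        fun t _ => pd_sq_bound (g (xs t)) b' η (hg (xs t)).1 (hg (xs t)).2
          hb'.1 hb'.2
      calc ∑ t ∈ Finset.range T, η^2*(g (xs t)-b')^2
          ≤ ∑ _t ∈ Finset.range T, η^2 := Finset.sum_le_sum hb
        _ = (T:ℝ) * η^2 := by
            rw [Finset.sum_const, Finset.card_range, nsmul_eq_mul]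
    have h00 : (lam 0 - lm)^2 ≤ U^2 :=
      pd_diff_sq (lam 0) lm U (hlam 0 (by omega)).1 (hlam 0 (by omega)).2
        hlm0 hlmU
    have hTT : 0 ≤ (lam T - lm)^2 := sq_nonneg _
    have hTR : 2*η*((T:ℝ)*R) = U^2 + (T:ℝ)*η^2 + (T:ℝ)*(2*εl*U + εl^2) := by
      rw [hR, hη]
      field_simp
      linear_combination (-(U^2) : ℝ) * hs2
    have hfinal : 2*η*(∑ t ∈ Finset.range T, (g (xs t) - b')*(lam t - lm))
        ≤ 2*η*((T:ℝ)*R) := by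
      rw [Finset.mul_sum, hTR]; linarith
    exact le_of_mul_le_mul_left hfinal (by positivity)
  -- primal optimality against xstar
  have hlow : ∀ t < T, f xstar ≤ f (xs t) + (g (xs t) - b') * lam t := by
    intro t ht
    have h1 := hprimal t ht xstar
    have h2 : lam t * b' ≤ lam t * g xstar :=
      mul_le_mul_of_nonneg_left hxstar_feas (hlam t ht.le).1
    have e : (g (xs t) - b') * lam t = lam t * g (xs t) - lam t * b' := by ring
    linarith
  have hTf : (T:ℝ) * f xbar = ∑ t ∈ Finset.range T, f (xs t) := by
    rw [hfbar]; field_simp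
  have hTg : (T:ℝ) * g xbar = ∑ t ∈ Finset.range T, g (xs t) := by
    rw [hgbar]; field_simp
  have hsumlow : (T:ℝ) * f xstar ≤ (T:ℝ) * f xbar
      + ∑ t ∈ Finset.range T, (g (xs t) - b') * lam t := by
    have h := Finset.sum_le_sum (fun t ht => hlow t (Finset.mem_range.mp ht))
    rw [Finset.sum_add_distrib, Finset.sum_const, Finset.card_range,
      nsmul_eq_mul] at h
    rw [hTf]; linarith
  constructor
  · -- objective guarantee, regret at lm = 0
    have hr0 := regret 0 le_rfl hU.le
    simp only [sub_zero] at hr0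
    have h : (T:ℝ)*(f xstar - R) ≤ (T:ℝ)*(f xbar) := by
      have e : (T:ℝ)*(f xstar - R) = (T:ℝ)*f xstar - (T:ℝ)*R := by ring
      linarith
    linarith [le_of_mul_le_mul_left h hT0]
  · -- constraint guarantee, regret at lm = U
    have hrU := regret U hU.le le_rfl
    have hqs : ∑ t ∈ Finset.range T, (g (xs t) - b')
        = (T:ℝ)*g xbar - (T:ℝ)*b' := by
      rw [Finset.sum_sub_distrib, Finset.sum_const, Finset.card_range,
        nsmul_eq_mul, hTg]
    have hsplit : ∑ t ∈ Finset.range T, (g (xs t) - b')*(lam t - U)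
        = (∑ t ∈ Finset.range T, (g (xs t) - b')*lam t)
          - U * ((T:ℝ) * g xbar - (T:ℝ) * b') := by
      rw [← hqs, Finset.mul_sum, ← Finset.sum_sub_distrib]
      exact Finset.sum_congr rfl (fun t _ => by ring)
    rw [hsplit] at hrU
    have hA : f xstar ≤ f xbar + U*(g xbar - b') + R := by
      have h : (T:ℝ) * f xstar ≤ (T:ℝ) * (f xbar + U*(g xbar - b') + R) := by
        have e : (T:ℝ)*(f xbar + U*(g xbar - b') + R)
            = (T:ℝ)*f xbar + U*((T:ℝ)*g xbar - (T:ℝ)*b') + (T:ℝ)*R := by ring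
        linarith
      exact le_of_mul_le_mul_left h hT0
    have hB := hduality xbar
    have hUl : 0 < U - lamstar := by linarith
    have hk : (b' - g xbar) * (U - lamstar) ≤ R := by
      have e : (b' - g xbar) * (U - lamstar)
          = -(U*(g xbar - b')) + lamstar*(g xbar - b') := by ring
      linarith
    have := (le_div_iff₀ hUl).mpr hk
    linarith
end

section
/- Let U > 0, ε_l ∈ (0, U), T ≥ 1 a natural number, and η := U / √T. Let g_0, …, g_{T−1} be real numbers with |g_t| ≤ 1 for all t < T, and let λ_0, …, λ_T be real numbers with λ_t ∈ [0, U] for all t and such that |λ_{t+1} − min(U, max(0, λ_t − η · g_t))| ≤ ε_l for every t < T. Then for every μ ∈ [0, U], ∑_{t=0}^{T−1} (λ_t − μ) · g_t ≤ T^{3/2} · (ε_l² + 2 ε_l U)/(2U) + U · √T. -/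
lemma clamp_lip (c a b : ℝ) : |min c a - min c b| ≤ |a - b| := by
  have h := abs_min_sub_min_le_max c a c b
  simpa using h

/-- Dual-regret bound (Lemma A.2) for projected subgradient ascent on `[0,U]`
with rounding to an `εl`-net. -/
theorem dual_regret_bound (U εl : ℝ) (hU : 0 < U) (hεl : εl ∈ Set.Ioo 0 U)
    (T : ℕ) (hT : 1 ≤ T) (η : ℝ) (hη : η = U / Real.sqrt T)
    (g lam : ℕ → ℝ)
    (hg : ∀ t < T, |g t| ≤ 1)
    (hlam : ∀ t ≤ T, lam t ∈ Set.Icc 0 U)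
    (hstep : ∀ t < T, |lam (t + 1) - min U (max 0 (lam t - η * g t))| ≤ εl) :
    ∀ μ ∈ Set.Icc (0 : ℝ) U,
      ∑ t ∈ Finset.range T, (lam t - μ) * g t ≤
        (T : ℝ) ^ ((3 : ℝ) / 2) * (εl ^ 2 + 2 * εl * U) / (2 * U) +
          U * Real.sqrt T := by
  intro μ hμ
  have hT0 : (0 : ℝ) < T := by exact_mod_cast Nat.lt_of_lt_of_le Nat.zero_lt_one hT
  set s := Real.sqrt T with hs
  have hsdef : s = Real.sqrt T := hs
  clear_value s
  have hs0 : 0 < s := hsdef ▸ Real.sqrt_pos.mpr hT0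
  have hs2 : s ^ 2 = T := hsdef ▸ Real.sq_sqrt hT0.le
  have hη0 : 0 < η := by rw [hη]; positivity
  set D : ℝ := εl ^ 2 + 2 * εl * U with hD
  clear_value D
  -- key per-step inequality
  have key : ∀ t < T, 2 * η * ((lam t - μ) * g t) ≤
      (lam t - μ) ^ 2 - (lam (t + 1) - μ) ^ 2 + η ^ 2 * (g t) ^ 2 + D := by
    intro t ht
    set y := min U (max 0 (lam t - η * g t)) with hy
    have hμ' : μ = min U (max 0 μ) := by
      rw [max_eq_right hμ.1, min_eq_right hμ.2]
    have h1 : |y - μ| ≤ |lam t - η * g t - μ| := by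
      calc |y - μ| = |min U (max 0 (lam t - η * g t)) - min U (max 0 μ)| := by
            rw [← hμ', hy]
        _ ≤ |max 0 (lam t - η * g t) - max 0 μ| := clamp_lip _ _ _
        _ ≤ |lam t - η * g t - μ| := by
            have := abs_max_sub_max_le_abs (lam t - η * g t) μ 0
            simpa [max_comm] using this
    have hy0 : 0 ≤ y := le_min hU.le (le_max_left 0 _)
    have hyU : y ≤ U := min_le_left _ _
    have h2 : |y - μ| ≤ U := abs_le.mpr ⟨by linarith [hμ.2], by linarith [hμ.1]⟩
    have h3 := hstep t ht
    have h4 : |lam (t + 1) - μ| ≤ εl + |y - μ| := by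
      calc |lam (t + 1) - μ| = |(lam (t + 1) - y) + (y - μ)| := by ring_nf
        _ ≤ |lam (t + 1) - y| + |y - μ| := abs_add_le _ _
        _ ≤ εl + |y - μ| := by linarith
    have h5 : (lam (t + 1) - μ) ^ 2 ≤ (εl + |y - μ|) ^ 2 := by
      have := abs_nonneg (lam (t + 1) - μ)
      nlinarith [sq_abs (lam (t + 1) - μ)]
    have h6 : |y - μ| ^ 2 ≤ (lam t - η * g t - μ) ^ 2 := by
      nlinarith [sq_abs (lam t - η * g t - μ), abs_nonneg (y - μ), abs_nonneg (lam t - η * g t - μ)]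
    have hεl0 : 0 < εl := hεl.1
    nlinarith [sq_abs (y - μ)]
  -- sum up
  have tele : ∑ t ∈ Finset.range T, ((lam t - μ) ^ 2 - (lam (t + 1) - μ) ^ 2)
      = (lam 0 - μ) ^ 2 - (lam T - μ) ^ 2 := by
    exact Finset.sum_range_sub' (fun t => (lam t - μ) ^ 2) T
  have sum1 : 2 * η * ∑ t ∈ Finset.range T, (lam t - μ) * g t ≤
      (lam 0 - μ) ^ 2 - (lam T - μ) ^ 2 + (T : ℝ) * (η ^ 2) + (T : ℝ) * D := by
    rw [Finset.mul_sum]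
    calc ∑ t ∈ Finset.range T, 2 * η * ((lam t - μ) * g t)
        ≤ ∑ t ∈ Finset.range T, ((lam t - μ) ^ 2 - (lam (t + 1) - μ) ^ 2 + η ^ 2 * (g t) ^ 2 + D) :=
          Finset.sum_le_sum (fun t ht => key t (Finset.mem_range.mp ht))
      _ ≤ ∑ t ∈ Finset.range T, ((lam t - μ) ^ 2 - (lam (t + 1) - μ) ^ 2 + η ^ 2 + D) := by
          refine Finset.sum_le_sum (fun t ht => ?_)
          have hgt := hg t (Finset.mem_range.mp ht)
          have h1 : (g t) ^ 2 ≤ 1 := by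
            have := sq_abs (g t)
            nlinarith [abs_nonneg (g t)]
          have h2 : η ^ 2 * (g t) ^ 2 ≤ η ^ 2 * 1 :=
            mul_le_mul_of_nonneg_left h1 (sq_nonneg η)
          linarith
      _ = (lam 0 - μ) ^ 2 - (lam T - μ) ^ 2 + (T : ℝ) * (η ^ 2) + (T : ℝ) * D := by
          rw [Finset.sum_add_distrib, Finset.sum_add_distrib, tele,
            Finset.sum_const, Finset.sum_const, Finset.card_range]
          ring
  have hlam0 := hlam 0 (Nat.zero_le T)
  have h0 : (lam 0 - μ) ^ 2 ≤ U ^ 2 := by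
    have h1 : -U ≤ lam 0 - μ := by linarith [hlam0.1, hμ.2]
    have h2 : lam 0 - μ ≤ U := by linarith [hlam0.2, hμ.1]
    exact sq_le_sq' h1 h2
  have hlamT := hlam T le_rfl
  have hT2 : (lam T - μ) ^ 2 ≥ 0 := sq_nonneg _
  -- plug in η = U / s
  have hTs : (T : ℝ) = s ^ 2 := hs2.symm
  have hrpow : (T : ℝ) ^ ((3 : ℝ) / 2) = (T : ℝ) * s := by
    rw [show (3 : ℝ) / 2 = 1 + 1 / 2 by norm_num, Real.rpow_add hT0, Real.rpow_one,
      hsdef, Real.sqrt_eq_rpow]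
  have hD0 : 0 < D := by
    rw [hD]
    have h1 : 0 < 2 * εl * U := mul_pos (mul_pos two_pos hεl.1) hU
    linarith [sq_nonneg εl]
  rw [hrpow]
  have hηval : η * s = U := by
    rw [hη, div_mul_cancel₀ _ (ne_of_gt hs0)]
  have e3 : (T : ℝ) * η ^ 2 = U ^ 2 := by
    linear_combination η ^ 2 * hTs + (η * s + U) * hηval
  have A : 2 * η * ∑ t ∈ Finset.range T, (lam t - μ) * g t ≤ 2 * U ^ 2 + (T : ℝ) * D := by
    linarith [sum1, h0, hT2]
  have B : 2 * η * ((T : ℝ) * s * D / (2 * U) + U * s) = 2 * U ^ 2 + (T : ℝ) * D := by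
    have hU0 : U ≠ 0 := ne_of_gt hU
    field_simp
    linear_combination ((T : ℝ) * D + 2 * U ^ 2) * hηval
  have hfin : ∑ t ∈ Finset.range T, (lam t - μ) * g t ≤ (T : ℝ) * s * D / (2 * U) + U * s :=
    le_of_mul_le_mul_left (by linarith [A, B.symm]) (by positivity : (0:ℝ) < 2 * η)
  exact hfin
end

section
/- Let X be a nonempty type and f, g : X → ℝ with f bounded above. Fix b ∈ ℝ and λ* ≥ 0, and set V := sSup { f x : x ∈ X, g x ≥ b }. Assume there exists x₀ ∈ X with g x₀ ≥ b, and assume the strong-duality inequality f x + λ* · (g x − b) ≤ V for all x ∈ X. Then for every C > λ*, every β ∈ ℝ, and every x̃ ∈ X satisfying V − f x̃ + C · max(b − g x̃, 0) ≤ β, one has max(b − g x̃, 0) ≤ β / (C − λ*). -/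
/-- Bounding the positive constraint value (Lemma A.3). -/
theorem constraint_violation_bound {X : Type*} [Nonempty X] (f g : X → ℝ)
    (hf : BddAbove (Set.range f))
    (b lamstar : ℝ) (hlam : 0 ≤ lamstar)
    (V : ℝ) (hV : V = sSup (f '' {x | g x ≥ b}))
    (hfeas : ∃ x₀, g x₀ ≥ b)
    (hdual : ∀ x, f x + lamstar * (g x - b) ≤ V) :
    ∀ C > lamstar, ∀ β : ℝ, ∀ xt : X,
      V - f xt + C * max (b - g xt) 0 ≤ β →
      max (b - g xt) 0 ≤ β / (C - lamstar) := by
  intro C hC β xt hβ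
  set m := max (b - g xt) 0 with hm
  have h1 : b - g xt ≤ m := le_max_left _ _
  have h2 : lamstar * (b - g xt) ≤ lamstar * m := mul_le_mul_of_nonneg_left h1 hlam
  have hd := hdual xt
  have key : (C - lamstar) * m ≤ β := by nlinarith
  rw [le_div_iff₀ (by linarith : (0:ℝ) < C - lamstar)]
  linarith [key]
end

section
/- Let X be a nonempty type and f, g : X → ℝ with f bounded above. Fix b ∈ ℝ and λ* ≥ 0, set V := sSup { f x : x ∈ X, g x ≥ b }, assume there exists x₀ ∈ X with g x₀ ≥ b, and assume f x + λ* · (g x − b) ≤ V for all x ∈ X. Then for every τ ∈ ℝ such that the set { x : g x ≥ b + τ } is nonempty, one has λ* · τ ≤ V − sSup { f x : x ∈ X, g x ≥ b + τ }. -/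
/-- Key inequality in the proof of the constraint-violation lemma:
`λ* τ ≤ ν(0) − ν(τ)`. -/
theorem lagrange_value_sensitivity {X : Type*} [Nonempty X] (f g : X → ℝ)
    (hf : BddAbove (Set.range f))
    (b lamstar : ℝ) (hlam : 0 ≤ lamstar)
    (V : ℝ) (hV : V = sSup (f '' {x | g x ≥ b}))
    (hfeas : ∃ x₀, g x₀ ≥ b)
    (hdual : ∀ x, f x + lamstar * (g x - b) ≤ V) :
    ∀ τ : ℝ, {x | g x ≥ b + τ}.Nonempty →
      lamstar * τ ≤ V - sSup (f '' {x | g x ≥ b + τ}) := by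
  intro τ hne
  have h : sSup (f '' {x | g x ≥ b + τ}) ≤ V - lamstar * τ := by
    apply csSup_le (hne.image f)
    rintro y ⟨x, hx, rfl⟩
    have h1 := hdual x
    have h2 : lamstar * τ ≤ lamstar * (g x - b) := by
      apply mul_le_mul_of_nonneg_left _ hlam
      simp only [Set.mem_setOf_eq] at hx; linarith
    linarith
  linarith
end

section
/- Let X be a nonempty type and f̂, ĝ, g : X → ℝ. Fix b ∈ ℝ, ω ≥ 0, and ε' > 0, and set b' := b − ε'. Suppose: (i) 0 ≤ f̂ x ≤ 1 + ω for all x; (ii) x_c ∈ X maximizes g, i.e. g x ≤ g x_c for all x, and ζ := g x_c − b ≥ 0; (iii) |ĝ x_c − g x_c| ≤ ε'/2; and (iv) λ* ≥ 0 satisfies the strong-duality inequality f̂ x + λ* · (ĝ x − b') ≤ sSup { f̂ y : y ∈ X, ĝ y ≥ b' } for all x ∈ X. Then λ* ≤ 2(1 + ω)/ε'. -/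
/-- Bounding the dual variable, Case 1 (relaxed threshold `b' = b − ε'`). -/
theorem dual_variable_bound_relaxed {X : Type*} [Nonempty X]
    (fh gh g : X → ℝ)
    (b ω ε' : ℝ) (hω : 0 ≤ ω) (hε' : 0 < ε')
    (b' : ℝ) (hb' : b' = b - ε')
    (hfh : ∀ x, 0 ≤ fh x ∧ fh x ≤ 1 + ω)
    (xc : X) (hxc : ∀ x, g x ≤ g xc)
    (ζ : ℝ) (hζ : ζ = g xc - b) (hζ0 : 0 ≤ ζ)
    (hconc : |gh xc - g xc| ≤ ε' / 2)
    (lamstar : ℝ) (hlam : 0 ≤ lamstar)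
    (hdual : ∀ x, fh x + lamstar * (gh x - b') ≤ sSup (fh '' {y | gh y ≥ b'})) :
    lamstar ≤ 2 * (1 + ω) / ε' := by
  have hghxc : gh xc - b' ≥ ε' / 2 := by
    have := abs_le.mp hconc
    have hg : g xc ≥ b := by linarith
    linarith [this.1]
  have hsup : sSup (fh '' {y | gh y ≥ b'}) ≤ 1 + ω := by
    apply Real.sSup_le
    · rintro x ⟨y, _, rfl⟩; exact (hfh y).2
    · linarith
  have h := hdual xc
  have h1 : lamstar * (ε' / 2) ≤ lamstar * (gh xc - b') :=
    mul_le_mul_of_nonneg_left hghxc hlam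
  have h2 : lamstar * (ε' / 2) ≤ 1 + ω := by
    have := (hfh xc).1; linarith
  rw [le_div_iff₀ hε']
  nlinarith
end

section
/- Let X be a nonempty type and f̂, ĝ, g : X → ℝ. Fix b ∈ ℝ, ω ≥ 0, and Δ with 0 < Δ < ζ/2, where x_c ∈ X maximizes g (g x ≤ g x_c for all x) and ζ := g x_c − b. Set b' := b + Δ. Suppose: (i) 0 ≤ f̂ x ≤ 1 + ω for all x; (ii) |ĝ x_c − g x_c| ≤ ζ/2 − Δ; and (iii) λ* ≥ 0 satisfies the strong-duality inequality f̂ x + λ* · (ĝ x − b') ≤ sSup { f̂ y : y ∈ X, ĝ y ≥ b' } for all x ∈ X. Then λ* ≤ 2(1 + ω)/ζ. -/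
/-- Bounding the dual variable, Case 2 (tightened threshold `b' = b + Δ`). -/
theorem dual_variable_bound_strict {X : Type*} [Nonempty X]
    (fh gh g : X → ℝ)
    (b ω : ℝ) (hω : 0 ≤ ω)
    (xc : X) (hxc : ∀ x, g x ≤ g xc)
    (ζ : ℝ) (hζ : ζ = g xc - b)
    (Δ : ℝ) (hΔ0 : 0 < Δ) (hΔ : Δ < ζ / 2)
    (b' : ℝ) (hb' : b' = b + Δ)
    (hfh : ∀ x, 0 ≤ fh x ∧ fh x ≤ 1 + ω)
    (hconc : |gh xc - g xc| ≤ ζ / 2 - Δ)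
    (lamstar : ℝ) (hlam : 0 ≤ lamstar)
    (hdual : ∀ x, fh x + lamstar * (gh x - b') ≤ sSup (fh '' {y | gh y ≥ b'})) :
    lamstar ≤ 2 * (1 + ω) / ζ := by
  have hζpos : 0 < ζ := by linarith
  have habs := abs_le.mp hconc
  have hgap : gh xc - b' ≥ ζ / 2 := by
    have := habs.1
    linarith [hζ ▸ (rfl : ζ = ζ)]
  -- bound sSup by 1 + ω
  have hbdd : ∀ z ∈ fh '' {y | gh y ≥ b'}, z ≤ 1 + ω := by
    rintro z ⟨y, _, rfl⟩; exact (hfh y).2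
  have hsup : sSup (fh '' {y | gh y ≥ b'}) ≤ 1 + ω := by
    apply csSup_le
    · exact ⟨fh xc, ⟨xc, by simp only [Set.mem_setOf_eq]; linarith, rfl⟩⟩
    · exact hbdd
  have h1 := hdual xc
  have h2 : lamstar * (ζ / 2) ≤ 1 + ω := by
    have hmul : lamstar * (ζ / 2) ≤ lamstar * (gh xc - b') :=
      mul_le_mul_of_nonneg_left hgap hlam
    nlinarith [(hfh xc).1]
  rw [le_div_iff₀ hζpos]
  nlinarith
end

section
/- Let X be a nonempty type, and let ρ_r, ρ_rp, ρ_c, ρ̂_rp, ρ̂_c : X → ℝ with |ρ_rp x − ρ_r x| ≤ ω for all x, where ω ≥ 0. Fix b ∈ ℝ and 0 < ε_opt < ε, and set b' := b − (ε − ε_opt)/2. Suppose: (i) π* ∈ X satisfies ρ_c π* ≥ b and ρ_r x ≤ ρ_r π* for every x with ρ_c x ≥ b; (ii) π̂* ∈ X satisfies ρ̂_c π̂* ≥ b' and ρ̂_rp x ≤ ρ̂_rp π̂* for every x with ρ̂_c x ≥ b'; (iii) π̂ ∈ X satisfies ρ̂_rp π̂ ≥ ρ̂_rp π̂* − ε_opt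 and ρ̂_c π̂ ≥ b' − ε_opt; and (iv) |ρ_c π̂ − ρ̂_c π̂| ≤ (ε − ε_opt)/2 and |ρ_c π* − ρ̂_c π*| ≤ (ε − ε_opt)/2. Then (a) ρ_c π̂ ≥ b − ε, and (b) ρ_r π* − ρ_r π̂ ≤ 2ω + ε_opt + |ρ_rp π* − ρ̂_rp π*| + |ρ̂_rp π̂ − ρ_rp π̂|. -/
/-- Decomposing the suboptimality under relaxed feasibility (Lemma B.1). -/
theorem decomposition_relaxed {X : Type*} [Nonempty X]
    (rho_r rho_rp rho_c rhoh_rp rhoh_c : X → ℝ)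
    (ω : ℝ) (hω : 0 ≤ ω)
    (hpert : ∀ x, |rho_rp x - rho_r x| ≤ ω)
    (b ε εopt : ℝ) (hεopt : 0 < εopt) (hlt : εopt < ε)
    (b' : ℝ) (hb' : b' = b - (ε - εopt) / 2)
    (pistar : X) (hfeas : rho_c pistar ≥ b)
    (hopt : ∀ x, rho_c x ≥ b → rho_r x ≤ rho_r pistar)
    (pihstar : X) (hfeas' : rhoh_c pihstar ≥ b')
    (hopt' : ∀ x, rhoh_c x ≥ b' → rhoh_rp x ≤ rhoh_rp pihstar)
    (pih : X) (hpd1 : rhoh_rp pih ≥ rhoh_rp pihstar - εopt)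
    (hpd2 : rhoh_c pih ≥ b' - εopt)
    (hc1 : |rho_c pih - rhoh_c pih| ≤ (ε - εopt) / 2)
    (hc2 : |rho_c pistar - rhoh_c pistar| ≤ (ε - εopt) / 2) :
    rho_c pih ≥ b - ε ∧
      rho_r pistar - rho_r pih ≤
        2 * ω + εopt + |rho_rp pistar - rhoh_rp pistar| +
          |rhoh_rp pih - rho_rp pih| := by
  obtain ⟨h1a, h1b⟩ := abs_le.mp hc1
  obtain ⟨h2a, h2b⟩ := abs_le.mp hc2
  obtain ⟨h3a, h3b⟩ := abs_le.mp (hpert pistar)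
  obtain ⟨h4a, h4b⟩ := abs_le.mp (hpert pih)
  have hA := le_abs_self (rho_rp pistar - rhoh_rp pistar)
  have hB := le_abs_self (rhoh_rp pih - rho_rp pih)
  have hfeas2 : rhoh_c pistar ≥ b' := by linarith
  have hkey := hopt' pistar hfeas2
  constructor
  · linarith
  · linarith
end

section
/- Let X be a nonempty type, and let ρ_r, ρ_rp, ρ_c, ρ̂_rp, ρ̂_c : X → ℝ with |ρ_rp x − ρ_r x| ≤ ω for all x, where ω ≥ 0. Fix b ∈ ℝ, Δ > 0, and 0 < ε_opt < Δ, and set b' := b + Δ and b'' := b − Δ. Suppose: (i) π* ∈ X satisfies ρ_c π* ≥ b; (ii) π̂* ∈ X satisfies ρ̂_c π̂* ≥ b' and ρ̂_rp x ≤ ρ̂_rp π̂* for every x with ρ̂_c x ≥ b'; (iii) π̃* ∈ X satisfies ρ̂_c π̃* ≥ b'' and ρ̂_rp x ≤ ρ̂_rp π̃* for every x with ρ̂_c x ≥ b''; (iv) λ* ≥ 0 satisfies the strong-duality inequality ρ̂_rp x + λ* · (ρ̂_c x − b') ≤ ρ̂_rp π̂* for all x ∈ X; (v) π̂ ∈ X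 satisfies ρ̂_rp π̂ ≥ ρ̂_rp π̂* − ε_opt and ρ̂_c π̂ ≥ b' − ε_opt; and (vi) |ρ_c π̂ − ρ̂_c π̂| ≤ Δ − ε_opt and |ρ_c π* − ρ̂_c π*| ≤ Δ. Then (a) ρ_c π̂ ≥ b, and (b) ρ_r π* − ρ_r π̂ ≤ 2ω + ε_opt + 2Δλ* + |ρ_rp π* − ρ̂_rp π*| + |ρ̂_rp π̂ − ρ_rp π̂|. -/
/-- Decomposing the suboptimality under strict feasibility (Lemma C.1). -/
theorem decomposition_strict {X : Type*} [Nonempty X]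
    (rho_r rho_rp rho_c rhoh_rp rhoh_c : X → ℝ)
    (ω : ℝ) (hω : 0 ≤ ω)
    (hpert : ∀ x, |rho_rp x - rho_r x| ≤ ω)
    (b Δ εopt : ℝ) (hΔ : 0 < Δ) (hεopt : 0 < εopt) (hlt : εopt < Δ)
    (b' b'' : ℝ) (hb' : b' = b + Δ) (hb'' : b'' = b - Δ)
    (pistar : X) (hfeas : rho_c pistar ≥ b)
    (pihstar : X) (hfeas' : rhoh_c pihstar ≥ b')
    (hopt' : ∀ x, rhoh_c x ≥ b' → rhoh_rp x ≤ rhoh_rp pihstar)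
    (pitstar : X) (hfeas'' : rhoh_c pitstar ≥ b'')
    (hopt'' : ∀ x, rhoh_c x ≥ b'' → rhoh_rp x ≤ rhoh_rp pitstar)
    (lamstar : ℝ) (hlam : 0 ≤ lamstar)
    (hdual : ∀ x, rhoh_rp x + lamstar * (rhoh_c x - b') ≤ rhoh_rp pihstar)
    (pih : X) (hpd1 : rhoh_rp pih ≥ rhoh_rp pihstar - εopt)
    (hpd2 : rhoh_c pih ≥ b' - εopt)
    (hc1 : |rho_c pih - rhoh_c pih| ≤ Δ - εopt)
    (hc2 : |rho_c pistar - rhoh_c pistar| ≤ Δ) :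
    rho_c pih ≥ b ∧
      rho_r pistar - rho_r pih ≤
        2 * ω + εopt + 2 * Δ * lamstar + |rho_rp pistar - rhoh_rp pistar| +
          |rhoh_rp pih - rho_rp pih| := by
  constructor
  · have h1 := abs_le.mp hc1
    linarith [h1.1]
  · have h1 := abs_le.mp (hpert pistar)
    have h2 := abs_le.mp (hpert pih)
    have h3 : rhoh_c pistar ≥ b'' := by
      have := abs_le.mp hc2
      linarith [this.1]
    have h4 := hopt'' pistar h3
    have h5 := hdual pitstar
    have h6 : rhoh_rp pitstar ≤ rhoh_rp pihstar + 2 * Δ * lamstar := by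
      nlinarith [mul_le_mul_of_nonneg_left (by linarith : b'' - b' ≤ rhoh_c pitstar - b') hlam]
    have h7 := le_abs_self (rho_rp pistar - rhoh_rp pistar)
    have h8 := le_abs_self (rhoh_rp pih - rho_rp pih)
    linarith
end

section
/- Let X be a nonempty type and f, g : X → ℝ. Fix b ∈ ℝ, Δ > 0, and λ* ≥ 0. Set V₁ := sSup { f x : x ∈ X, g x ≥ b } and V₂ := sSup { f x : x ∈ X, g x ≥ b + Δ }. Assume there exists x₁ ∈ X with g x₁ ≥ b + Δ, and assume the strong-duality inequality f x + λ* · (g x − (b + Δ)) ≤ V₂ for all x ∈ X. Then |V₁ − V₂| ≤ Δ · λ*. -/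
/-- Sensitivity lemma (Lemma E.1): the optimal values at thresholds `b` and
`b + Δ` differ by at most `Δ · λ*`. -/
theorem sensitivity_bound {X : Type*} [Nonempty X] (f g : X → ℝ)
    (b Δ lamstar : ℝ) (hΔ : 0 < Δ) (hlam : 0 ≤ lamstar)
    (V1 V2 : ℝ)
    (hV1 : V1 = sSup (f '' {x | g x ≥ b}))
    (hV2 : V2 = sSup (f '' {x | g x ≥ b + Δ}))
    (hfeas : ∃ x₁, g x₁ ≥ b + Δ)
    (hdual : ∀ x, f x + lamstar * (g x - (b + Δ)) ≤ V2) :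
    |V1 - V2| ≤ Δ * lamstar := by
  obtain ⟨x₁, hx₁⟩ := hfeas
  have hub : ∀ y ∈ f '' {x | g x ≥ b}, y ≤ V2 + Δ * lamstar := by
    rintro y ⟨x, hx, rfl⟩
    have h := hdual x
    have : lamstar * (g x - (b + Δ)) ≥ lamstar * (-Δ) := by
      apply mul_le_mul_of_nonneg_left _ hlam
      simp only [Set.mem_setOf_eq, ge_iff_le] at hx
      linarith
    nlinarith
  have hbdd : BddAbove (f '' {x | g x ≥ b}) := ⟨V2 + Δ * lamstar, hub⟩
  have hsub : f '' {x | g x ≥ b + Δ} ⊆ f '' {x | g x ≥ b} := by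
    rintro y ⟨x, hx, rfl⟩
    exact ⟨x, by simp only [Set.mem_setOf_eq] at *; linarith, rfl⟩
  have hne2 : (f '' {x | g x ≥ b + Δ}).Nonempty := ⟨f x₁, x₁, hx₁, rfl⟩
  have hle : V2 ≤ V1 := by
    rw [hV1, hV2]; exact csSup_le_csSup hbdd hne2 hsub
  have hle2 : V1 ≤ V2 + Δ * lamstar := by
    rw [hV1]
    exact csSup_le (hne2.mono hsub) hub
  rw [abs_le]
  constructor <;> nlinarith [mul_nonneg hΔ.le hlam]
end

section
/- Let S be a finite nonempty type and let V, V̂, ρ, ρ̂ : S → ℝ. Let B ≥ 0, H ≥ 0 with B + H > 0, let 0 < ε ≤ 4(B + H), and set γ := 1 − ε/(4(B + H)). Assume |V s − V̂ s| ≤ B + H for all s, |V s − ρ s/(1 − γ)| ≤ H for all s, and |V̂ s − ρ̂ s/(1 − γ)| ≤ 2H for all s. Then |ρ s − ρ̂ s| ≤ ε for all s. -/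
/-- From AMDP to DMDP (Lemma D.1): the arithmetic inequality converting a
`(B+H)`-accurate discounted estimate into an `ε`-accurate average-reward
estimate at discount `γ = 1 − ε/(4(B+H))`. -/
theorem amdp_to_dmdp {S : Type*} [Fintype S] [Nonempty S]
    (V Vh ρ ρh : S → ℝ) (B H : ℝ) (hB : 0 ≤ B) (hH : 0 ≤ H)
    (hBH : 0 < B + H)
    (ε : ℝ) (hε : 0 < ε) (hε4 : ε ≤ 4 * (B + H))
    (γ : ℝ) (hγ : γ = 1 - ε / (4 * (B + H)))
    (h1 : ∀ s, |V s - Vh s| ≤ B + H)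
    (h2 : ∀ s, |V s - ρ s / (1 - γ)| ≤ H)
    (h3 : ∀ s, |Vh s - ρh s / (1 - γ)| ≤ 2 * H) :
    ∀ s, |ρ s - ρh s| ≤ ε := by
  intro s
  have hd : 1 - γ = ε / (4 * (B + H)) := by rw [hγ]; ring
  have hdpos : 0 < 1 - γ := by rw [hd]; positivity
  have key : |ρ s / (1 - γ) - ρh s / (1 - γ)| ≤ B + 4 * H := by
    have := abs_sub_abs_le_abs_sub (ρ s) (ρh s)
    calc |ρ s / (1 - γ) - ρh s / (1 - γ)|
        = |(ρ s / (1 - γ) - V s) + (V s - Vh s) + (Vh s - ρh s / (1 - γ))| := by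
          ring_nf
      _ ≤ |ρ s / (1 - γ) - V s| + |V s - Vh s| + |Vh s - ρh s / (1 - γ)| := by
          exact abs_add_three _ _ _
      _ ≤ H + (B + H) + 2 * H := by
          have := h2 s
          rw [abs_sub_comm] at this
          linarith [this, h1 s, h3 s]
      _ = B + 4 * H := by ring
  have heq : |ρ s - ρh s| = (1 - γ) * |ρ s / (1 - γ) - ρh s / (1 - γ)| := by
    rw [div_sub_div_same, abs_div, abs_of_pos hdpos]
    field_simp
  rw [heq]
  have h4 : B + 4 * H ≤ 4 * (B + H) := by linarith
  calc (1 - γ) * |ρ s / (1 - γ) - ρh s / (1 - γ)|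
      ≤ (1 - γ) * (4 * (B + H)) :=
        mul_le_mul_of_nonneg_left (key.trans h4) hdpos.le
    _ = ε := by rw [hd]; field_simp
end

section
/- Let S be a finite nonempty type and P : Matrix S S ℝ a row-stochastic matrix (P i j ≥ 0 for all i, j and each row sums to 1). Let 0 ≤ γ < 1 and let ρ, h, r : S → ℝ satisfy P.mulVec ρ = ρ and ρ s + h s = r s + (P.mulVec h) s for all s (the Poisson/Bellman evaluation equation). Then for every s ∈ S, |(∑'_{t : ℕ} γ^t · ((P^t).mulVec r) s) − ρ s/(1 − γ)| ≤ span(h), where span(h) := (max over s of h s) − (min over s of h s). -/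
open Matrix

private lemma pow_stoch {S : Type*} [Fintype S] [DecidableEq S]
    (P : Matrix S S ℝ) (hP1 : ∀ i j, 0 ≤ P i j) (hP2 : ∀ i, ∑ j, P i j = 1) :
    ∀ t : ℕ, (∀ i j, 0 ≤ (P ^ t) i j) ∧ (∀ i, ∑ j, (P ^ t) i j = 1) := by
  intro t
  induction t with
  | zero =>
    constructor
    · intro i j
      by_cases hij : i = j <;> simp [Matrix.one_apply, hij]
    · intro i; simp [Matrix.one_apply]
  | succ n ih =>
    constructor
    · intro i j
      rw [pow_succ, Matrix.mul_apply]
      exact Finset.sum_nonneg fun k _ => mul_nonneg (ih.1 i k) (hP1 k j)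
    · intro i
      simp only [pow_succ, Matrix.mul_apply]
      rw [Finset.sum_comm]
      have : ∀ k ∈ Finset.univ, ∑ j, (P ^ n) i k * P k j = (P ^ n) i k := by
        intro k _
        rw [← Finset.mul_sum, hP2 k, mul_one]
      rw [Finset.sum_congr rfl this, ih.2 i]

private lemma mulVec_bounds {S : Type*} [Fintype S] [Nonempty S]
    (Q : Matrix S S ℝ) (hQ1 : ∀ i j, 0 ≤ Q i j) (hQ2 : ∀ i, ∑ j, Q i j = 1)
    (v : S → ℝ) (s : S) :
    (⨅ j, v j) ≤ Q.mulVec v s ∧ Q.mulVec v s ≤ ⨆ j, v j := by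
  have hba : BddAbove (Set.range v) := (Set.finite_range v).bddAbove
  have hbb : BddBelow (Set.range v) := (Set.finite_range v).bddBelow
  constructor
  · calc (⨅ j, v j) = ∑ j, Q s j * (⨅ j, v j) := by
          rw [← Finset.sum_mul, hQ2 s, one_mul]
      _ ≤ ∑ j, Q s j * v j :=
          Finset.sum_le_sum fun j _ =>
            mul_le_mul_of_nonneg_left (ciInf_le hbb j) (hQ1 s j)
      _ = Q.mulVec v s := by rw [Matrix.mulVec, dotProduct]
  · calc Q.mulVec v s = ∑ j, Q s j * v j := by rw [Matrix.mulVec, dotProduct]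
      _ ≤ ∑ j, Q s j * (⨆ j, v j) :=
          Finset.sum_le_sum fun j _ =>
            mul_le_mul_of_nonneg_left (le_ciSup hba j) (hQ1 s j)
      _ = ⨆ j, v j := by rw [← Finset.sum_mul, hQ2 s, one_mul]

/-- Lemma D.2: the discounted value `∑ γ^t P^t r` differs from `ρ/(1−γ)` by at
most the span of the bias `h`, whenever `(ρ, h)` satisfies the Poisson
equation for the row-stochastic matrix `P`. -/
theorem discounted_close_to_average {S : Type*} [Fintype S] [Nonempty S]
    [DecidableEq S]
    (P : Matrix S S ℝ) (hP1 : ∀ i j, 0 ≤ P i j) (hP2 : ∀ i, ∑ j, P i j = 1)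
    (γ : ℝ) (hγ0 : 0 ≤ γ) (hγ1 : γ < 1)
    (ρ h r : S → ℝ)
    (hfix : P.mulVec ρ = ρ)
    (hpoisson : ∀ s, ρ s + h s = r s + P.mulVec h s) :
    ∀ s, |(∑' t : ℕ, γ ^ t * (P ^ t).mulVec r s) - ρ s / (1 - γ)| ≤
      (⨆ s, h s) - (⨅ s, h s) := by
  intro s
  set m : ℝ := ⨅ s, h s with hm
  set M : ℝ := ⨆ s, h s with hM
  set b : ℕ → ℝ := fun t => (P ^ t).mulVec h s with hb
  have hst := pow_stoch P hP1 hP2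
  have hb_lb : ∀ t, m ≤ b t := fun t =>
    (mulVec_bounds (P ^ t) (hst t).1 (hst t).2 h s).1
  have hb_ub : ∀ t, b t ≤ M := fun t =>
    (mulVec_bounds (P ^ t) (hst t).1 (hst t).2 h s).2
  -- fixed point of powers
  have hfixpow : ∀ t : ℕ, (P ^ t).mulVec ρ = ρ := by
    intro t
    induction t with
    | zero => simp
    | succ n ih => rw [pow_succ, ← Matrix.mulVec_mulVec, hfix, ih]
  -- key identity
  have hr : r = (ρ + h) - P.mulVec h := by
    funext j
    have := hpoisson j
    simp only [Pi.sub_apply, Pi.add_apply]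
    linarith
  have key : ∀ t : ℕ, (P ^ t).mulVec r s = ρ s + b t - b (t + 1) := by
    intro t
    rw [hr, Matrix.mulVec_sub, Matrix.mulVec_add, hfixpow t]
    have : (P ^ t).mulVec (P.mulVec h) = (P ^ (t + 1)).mulVec h := by
      rw [Matrix.mulVec_mulVec, ← pow_succ]
    rw [this]
    simp [hb]
  -- summability facts
  have hγabs : |γ| < 1 := by rw [abs_of_nonneg hγ0]; exact hγ1
  have hgeo : Summable (fun t : ℕ => γ ^ t) := summable_geometric_of_lt_one hγ0 hγ1
  set C : ℝ := max |m| |M| with hC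
  have hbC : ∀ t, |b t| ≤ C := by
    intro t
    have h1 := hb_lb t
    have h2 := hb_ub t
    have : -C ≤ b t ∧ b t ≤ C := by
      constructor
      · have : -|m| ≤ m := neg_abs_le m
        have : -C ≤ m := by
          have := le_max_left |m| |M|
          linarith [neg_abs_le m]
        linarith
      · have : M ≤ C := le_trans (le_abs_self M) (le_max_right |m| |M|)
        linarith
    exact abs_le.mpr this
  have hsum1 : Summable (fun t : ℕ => γ ^ t * b t) := by
    apply Summable.of_norm_bounded
      (hgeo.mul_right C)
    intro t
    rw [Real.norm_eq_abs, abs_mul, abs_pow, abs_of_nonneg hγ0]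
    exact mul_le_mul_of_nonneg_left (hbC t) (pow_nonneg hγ0 t)
  have hsum2 : Summable (fun t : ℕ => γ ^ t * b (t + 1)) := by
    apply Summable.of_norm_bounded
      (hgeo.mul_right C)
    intro t
    rw [Real.norm_eq_abs, abs_mul, abs_pow, abs_of_nonneg hγ0]
    exact mul_le_mul_of_nonneg_left (hbC (t + 1)) (pow_nonneg hγ0 t)
  have hsumρ : Summable (fun t : ℕ => γ ^ t * ρ s) := hgeo.mul_right (ρ s)
  have hγne : (1 : ℝ) - γ ≠ 0 := by linarith
  have hγpos : (0 : ℝ) < 1 - γ := by linarith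
  -- compute the tsum
  have hcalc : (∑' t : ℕ, γ ^ t * (P ^ t).mulVec r s)
      = ρ s / (1 - γ) + (∑' t : ℕ, γ ^ t * b t) - (∑' t : ℕ, γ ^ t * b (t + 1)) := by
    have heq : (fun t : ℕ => γ ^ t * (P ^ t).mulVec r s)
        = fun t : ℕ => γ ^ t * ρ s + γ ^ t * b t - γ ^ t * b (t + 1) := by
      funext t
      rw [key t]; ring
    rw [heq]
    rw [Summable.tsum_sub (hsumρ.add hsum1) hsum2, Summable.tsum_add hsumρ hsum1]
    have : (∑' t : ℕ, γ ^ t * ρ s) = ρ s / (1 - γ) := by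
      rw [tsum_mul_right, tsum_geometric_of_lt_one hγ0 hγ1]
      ring
    rw [this]
  -- shift identity
  have hshift : (∑' t : ℕ, γ ^ t * b t)
      = b 0 + γ * (∑' t : ℕ, γ ^ t * b (t + 1)) := by
    rw [Summable.tsum_eq_zero_add hsum1]
    simp only [pow_zero, one_mul]
    congr 1
    rw [← tsum_mul_left]
    congr 1
    funext t
    rw [pow_succ]
    ring
  set T : ℝ := ∑' t : ℕ, γ ^ t * b (t + 1) with hT
  have hTub : T ≤ M / (1 - γ) := by
    have : (∑' t : ℕ, γ ^ t * b (t + 1)) ≤ ∑' t : ℕ, γ ^ t * M := by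
      apply Summable.tsum_le_tsum _ hsum2 (hgeo.mul_right M)
      intro t
      exact mul_le_mul_of_nonneg_left (hb_ub (t + 1)) (pow_nonneg hγ0 t)
    rw [tsum_mul_right, tsum_geometric_of_lt_one hγ0 hγ1] at this
    rw [hT]
    calc (∑' t : ℕ, γ ^ t * b (t + 1)) ≤ (1 - γ)⁻¹ * M := this
      _ = M / (1 - γ) := by ring
  have hTlb : m / (1 - γ) ≤ T := by
    have : (∑' t : ℕ, γ ^ t * m) ≤ ∑' t : ℕ, γ ^ t * b (t + 1) := by
      apply Summable.tsum_le_tsum _ (hgeo.mul_right m) hsum2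
      intro t
      exact mul_le_mul_of_nonneg_left (hb_lb (t + 1)) (pow_nonneg hγ0 t)
    rw [tsum_mul_right, tsum_geometric_of_lt_one hγ0 hγ1] at this
    rw [hT]
    calc m / (1 - γ) = (1 - γ)⁻¹ * m := by ring
      _ ≤ ∑' t : ℕ, γ ^ t * b (t + 1) := this
  have hfinal : (∑' t : ℕ, γ ^ t * (P ^ t).mulVec r s) - ρ s / (1 - γ)
      = b 0 - (1 - γ) * T := by
    rw [hcalc, hshift]; ring
  rw [hfinal]
  have hb0l : m ≤ b 0 := hb_lb 0
  have hb0u : b 0 ≤ M := hb_ub 0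
  have h1 : (1 - γ) * T ≤ M := by
    have := mul_le_mul_of_nonneg_left hTub (le_of_lt hγpos)
    rwa [mul_div_cancel₀ M hγne] at this
  have h2 : m ≤ (1 - γ) * T := by
    have := mul_le_mul_of_nonneg_left hTlb (le_of_lt hγpos)
    rwa [mul_div_cancel₀ m hγne] at this
  rw [abs_le]
  constructor <;> [linarith; linarith]
end

section
/- Let S be a finite nonempty type and P : Matrix S S ℝ a row-stochastic matrix (P i j ≥ 0 for all i, j and each row sums to 1). Let 0 ≤ γ < 1 and h : S → ℝ. Then for every s ∈ S, |∑'_{t : ℕ} γ^t · ((P^t).mulVec (h − P.mulVec h)) s| ≤ span(h), where span(h) := (max over s of h s) − (min over s of h s). -/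
/-- Key step of Lemma D.2: `(I − γP)⁻¹(I − P) h` has sup norm at most
`span(h)`. -/
theorem neumann_series_span_bound {S : Type*} [Fintype S] [Nonempty S]
    [DecidableEq S]
    (P : Matrix S S ℝ) (hP1 : ∀ i j, 0 ≤ P i j) (hP2 : ∀ i, ∑ j, P i j = 1)
    (γ : ℝ) (hγ0 : 0 ≤ γ) (hγ1 : γ < 1)
    (h : S → ℝ) :
    ∀ s, |∑' t : ℕ, γ ^ t * (P ^ t).mulVec (h - P.mulVec h) s| ≤
      (⨆ s, h s) - (⨅ s, h s) := by
  intro s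
  set M : ℝ := ⨆ s, h s with hM
  set m : ℝ := ⨅ s, h s with hm
  have hbddA : BddAbove (Set.range h) := (Set.finite_range h).bddAbove
  have hbddB : BddBelow (Set.range h) := (Set.finite_range h).bddBelow
  have hhM : ∀ j, h j ≤ M := fun j => le_ciSup hbddA j
  have hmh : ∀ j, m ≤ h j := fun j => ciInf_le hbddB j
  have hmM : m ≤ M := le_trans (hmh (Classical.arbitrary S)) (hhM _)
  -- P^t is row-stochastic
  have hstoch : ∀ t : ℕ, (∀ i j, 0 ≤ (P ^ t) i j) ∧ (∀ i, ∑ j, (P ^ t) i j = 1) := by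
    intro t
    induction t with
    | zero =>
      constructor
      · intro i j
        simp [Matrix.one_apply]
        split <;> norm_num
      · intro i
        simp [Matrix.one_apply]
    | succ n ih =>
      have hpow : P ^ (n+1) = P ^ n * P := pow_succ P n
      constructor
      · intro i j
        rw [hpow, Matrix.mul_apply]
        exact Finset.sum_nonneg fun k _ => mul_nonneg (ih.1 i k) (hP1 k j)
      · intro i
        rw [hpow]
        simp only [Matrix.mul_apply]
        rw [Finset.sum_comm]
        calc ∑ k, ∑ j, (P ^ n) i k * P k j
            = ∑ k, (P ^ n) i k * ∑ j, P k j := by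
              simp [Finset.mul_sum]
          _ = 1 := by simp [hP2, ih.2 i]
  -- a t := (P^t).mulVec h s
  set a : ℕ → ℝ := fun t => (P ^ t).mulVec h s with ha
  have haM : ∀ t, a t ≤ M := by
    intro t
    have : a t = ∑ j, (P ^ t) s j * h j := rfl
    rw [this]
    calc ∑ j, (P ^ t) s j * h j ≤ ∑ j, (P ^ t) s j * M :=
          Finset.sum_le_sum fun j _ => mul_le_mul_of_nonneg_left (hhM j) ((hstoch t).1 s j)
      _ = M := by rw [← Finset.sum_mul, (hstoch t).2 s, one_mul]
  have ham : ∀ t, m ≤ a t := by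
    intro t
    have : a t = ∑ j, (P ^ t) s j * h j := rfl
    rw [this]
    calc m = ∑ j, (P ^ t) s j * m := by rw [← Finset.sum_mul, (hstoch t).2 s, one_mul]
      _ ≤ ∑ j, (P ^ t) s j * h j :=
          Finset.sum_le_sum fun j _ => mul_le_mul_of_nonneg_left (hmh j) ((hstoch t).1 s j)
  -- rewrite term
  have hterm : ∀ t : ℕ, γ ^ t * (P ^ t).mulVec (h - P.mulVec h) s
      = γ ^ t * a t - γ ^ t * a (t + 1) := by
    intro t
    have : (P ^ t).mulVec (h - P.mulVec h) s = a t - a (t + 1) := by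
      rw [Matrix.mulVec_sub]
      have : (P ^ t).mulVec (P.mulVec h) = (P ^ (t+1)).mulVec h := by
        rw [Matrix.mulVec_mulVec, ← pow_succ]
      simp [ha, this, Pi.sub_apply]
    rw [this, mul_sub]
  -- summability
  set C : ℝ := max |m| |M| with hC
  have haC : ∀ t, |a t| ≤ C := by
    intro t
    rw [abs_le]
    constructor
    · have := ham t
      have h1 : -C ≤ m := neg_le_of_abs_le (le_max_left _ _) |>.trans_eq rfl
      linarith [neg_abs_le m, le_max_left |m| |M|]
    · exact (haM t).trans ((le_abs_self M).trans (le_max_right _ _))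
  have hgeo : Summable (fun t : ℕ => γ ^ t) := summable_geometric_of_lt_one hγ0 hγ1
  have hsum1 : Summable (fun t : ℕ => γ ^ t * a t) := by
    apply Summable.of_norm_bounded (hgeo.mul_left C)
    intro t
    rw [Real.norm_eq_abs, abs_mul, abs_pow, abs_of_nonneg hγ0]
    rw [mul_comm]
    exact mul_le_mul_of_nonneg_right (haC t) (pow_nonneg hγ0 t)
  have hsum2 : Summable (fun t : ℕ => γ ^ t * a (t + 1)) := by
    apply Summable.of_norm_bounded (hgeo.mul_left C)
    intro t
    rw [Real.norm_eq_abs, abs_mul, abs_pow, abs_of_nonneg hγ0]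
    rw [mul_comm]
    exact mul_le_mul_of_nonneg_right (haC (t+1)) (pow_nonneg hγ0 t)
  have hsum3 : Summable (fun t : ℕ => γ ^ (t+1) * a (t + 1)) := by
    apply Summable.of_norm_bounded (hgeo.mul_left C)
    intro t
    rw [Real.norm_eq_abs, abs_mul, abs_pow, abs_of_nonneg hγ0]
    rw [mul_comm]
    exact mul_le_mul (haC (t+1)) (pow_le_pow_of_le_one hγ0 hγ1.le (Nat.le_succ t))
      (pow_nonneg hγ0 _) ((abs_nonneg m).trans (le_max_left _ _))
  have hsum4 : Summable (fun t : ℕ => (γ ^ (t+1) - γ ^ t) * a (t + 1)) := by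
    have : (fun t : ℕ => (γ ^ (t+1) - γ ^ t) * a (t + 1))
        = fun t => γ ^ (t+1) * a (t+1) - γ ^ t * a (t+1) := by
      funext t; ring
    rw [this]
    exact hsum3.sub hsum2
  -- tsum manipulation
  have hkey : ∑' t : ℕ, γ ^ t * (P ^ t).mulVec (h - P.mulVec h) s
      = a 0 + ∑' t : ℕ, (γ ^ (t+1) - γ ^ t) * a (t + 1) := by
    calc ∑' t : ℕ, γ ^ t * (P ^ t).mulVec (h - P.mulVec h) s
        = ∑' t : ℕ, (γ ^ t * a t - γ ^ t * a (t + 1)) := by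
          exact tsum_congr hterm
      _ = (∑' t : ℕ, γ ^ t * a t) - ∑' t : ℕ, γ ^ t * a (t + 1) := Summable.tsum_sub hsum1 hsum2
      _ = (a 0 + ∑' t : ℕ, γ ^ (t+1) * a (t + 1)) - ∑' t : ℕ, γ ^ t * a (t + 1) := by
          rw [Summable.tsum_eq_zero_add hsum1]
          simp
      _ = a 0 + ∑' t : ℕ, (γ ^ (t+1) - γ ^ t) * a (t + 1) := by
          rw [add_sub_assoc, ← Summable.tsum_sub hsum3 hsum2]
          congr 1
          exact tsum_congr fun t => by ring
  rw [hkey]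
  -- coefficient sum: ∑ (γ^t − γ^{t+1}) = 1
  have hcoef : ∑' t : ℕ, (γ ^ t - γ ^ (t+1)) = 1 := by
    have : (fun t : ℕ => γ ^ t - γ ^ (t+1)) = fun t => (1 - γ) * γ ^ t := by
      funext t; ring
    rw [this, tsum_mul_left, tsum_geometric_of_lt_one hγ0 hγ1]
    exact div_self (by linarith)
  have hcoefneg : ∀ t : ℕ, γ ^ (t+1) - γ ^ t ≤ 0 := by
    intro t
    have h2 : γ ^ (t+1) ≤ γ ^ t := by
      simpa using pow_le_pow_of_le_one hγ0 hγ1.le (Nat.le_succ t)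
    linarith
  have hsumc : Summable (fun t : ℕ => (γ ^ (t+1) - γ ^ t)) := by
    have : (fun t : ℕ => γ ^ (t+1) - γ ^ t) = fun t => (γ - 1) * γ ^ t := by
      funext t; ring
    rw [this]; exact hgeo.mul_left _
  have hcoef' : ∑' t : ℕ, (γ ^ (t+1) - γ ^ t) = -1 := by
    have : (fun t : ℕ => γ ^ (t+1) - γ ^ t) = fun t => -(γ ^ t - γ ^ (t+1)) := by
      funext t; ring
    rw [this, tsum_neg, hcoef]
  -- bounds on tail sum
  have hub : ∑' t : ℕ, (γ ^ (t+1) - γ ^ t) * a (t + 1) ≤ -m := by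
    calc ∑' t : ℕ, (γ ^ (t+1) - γ ^ t) * a (t + 1)
        ≤ ∑' t : ℕ, (γ ^ (t+1) - γ ^ t) * m := by
          apply Summable.tsum_le_tsum _ hsum4 (hsumc.mul_right m)
          intro t
          exact mul_le_mul_of_nonpos_left (ham (t+1)) (hcoefneg t)
      _ = -m := by rw [tsum_mul_right, hcoef']; ring
  have hlb : -M ≤ ∑' t : ℕ, (γ ^ (t+1) - γ ^ t) * a (t + 1) := by
    calc (-M : ℝ) = ∑' t : ℕ, (γ ^ (t+1) - γ ^ t) * M := by
          rw [tsum_mul_right, hcoef']; ring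
      _ ≤ ∑' t : ℕ, (γ ^ (t+1) - γ ^ t) * a (t + 1) := by
          apply Summable.tsum_le_tsum _ (hsumc.mul_right M) hsum4
          intro t
          exact mul_le_mul_of_nonpos_left (haM (t+1)) (hcoefneg t)
  rw [abs_le]
  constructor
  · linarith [ham 0]
  · linarith [haM 0]
end

section
/- Let S be a finite nonempty type and let A, B : Matrix S S ℝ be row-stochastic matrices (all entries nonnegative, each row summing to 1). Then for every h : S → ℝ and every i ∈ S, |((A − B).mulVec h) i| ≤ span(h), where span(h) := (max over s of h s) − (min over s of h s). -/
/-- A difference of two row-stochastic matrices applied to a vector `h` has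
sup norm at most the span of `h`. -/
theorem stochastic_diff_span_bound {S : Type*} [Fintype S] [Nonempty S]
    (A B : Matrix S S ℝ)
    (hA1 : ∀ i j, 0 ≤ A i j) (hA2 : ∀ i, ∑ j, A i j = 1)
    (hB1 : ∀ i j, 0 ≤ B i j) (hB2 : ∀ i, ∑ j, B i j = 1) :
    ∀ (h : S → ℝ) (i : S),
      |(A - B).mulVec h i| ≤ (⨆ s, h s) - (⨅ s, h s) := by
  intro h i
  have hM : ∀ s, h s ≤ ⨆ s, h s := fun s => le_ciSup (Set.Finite.bddAbove (Set.finite_range h)) s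
  have hm : ∀ s, (⨅ s, h s) ≤ h s := fun s => ciInf_le (Set.Finite.bddBelow (Set.finite_range h)) s
  have key : ∀ (C : Matrix S S ℝ), (∀ i j, 0 ≤ C i j) → (∀ i, ∑ j, C i j = 1) →
      (⨅ s, h s) ≤ C.mulVec h i ∧ C.mulVec h i ≤ ⨆ s, h s := by
    intro C hC1 hC2
    constructor
    · calc (⨅ s, h s) = ∑ j, C i j * (⨅ s, h s) := by
            rw [← Finset.sum_mul, hC2 i, one_mul]
      _ ≤ ∑ j, C i j * h j :=
            Finset.sum_le_sum fun j _ => mul_le_mul_of_nonneg_left (hm j) (hC1 i j)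
      _ = C.mulVec h i := by simp [Matrix.mulVec, dotProduct]
    · calc C.mulVec h i = ∑ j, C i j * h j := by simp [Matrix.mulVec, dotProduct]
      _ ≤ ∑ j, C i j * (⨆ s, h s) :=
            Finset.sum_le_sum fun j _ => mul_le_mul_of_nonneg_left (hM j) (hC1 i j)
      _ = ⨆ s, h s := by rw [← Finset.sum_mul, hC2 i, one_mul]
  obtain ⟨hAlo, hAhi⟩ := key A hA1 hA2
  obtain ⟨hBlo, hBhi⟩ := key B hB1 hB2
  have : (A - B).mulVec h i = A.mulVec h i - B.mulVec h i := by
    simp [Matrix.sub_mulVec]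
  rw [this, abs_sub_le_iff]
  constructor <;> linarith
end

section
/- Let a, B be real numbers with 0 < a ≤ 1/4 and B > 0. Then ((1 − 2a)/(2B)) · log((1 − 2a)/(1 + 2a)) + ((1 + 2a)/(2B)) · log((1 + 2a)/(1 − 2a)) ≤ 32 a² / B. -/
/-- The KL-divergence estimate used in the lower-bound argument. -/
theorem kl_divergence_bound (a B : ℝ) (ha0 : 0 < a) (ha : a ≤ 1 / 4)
    (hB : 0 < B) :
    ((1 - 2 * a) / (2 * B)) * Real.log ((1 - 2 * a) / (1 + 2 * a)) +
        ((1 + 2 * a) / (2 * B)) * Real.log ((1 + 2 * a) / (1 - 2 * a)) ≤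
      32 * a ^ 2 / B := by
  have h1 : (0:ℝ) < 1 - 2 * a := by linarith
  have h2 : (0:ℝ) < 1 + 2 * a := by linarith
  have hx : (0:ℝ) < (1 + 2 * a) / (1 - 2 * a) := div_pos h2 h1
  have hlogneg : Real.log ((1 - 2 * a) / (1 + 2 * a)) =
      - Real.log ((1 + 2 * a) / (1 - 2 * a)) := by
    rw [← Real.log_inv]
    congr 1
    field_simp
  have hL : Real.log ((1 + 2 * a) / (1 - 2 * a)) ≤ 8 * a := by
    have := Real.log_le_sub_one_of_pos hx
    have hsub : (1 + 2 * a) / (1 - 2 * a) - 1 = 4 * a / (1 - 2 * a) := by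
      field_simp
      ring
    have hb : 4 * a / (1 - 2 * a) ≤ 8 * a := by
      rw [div_le_iff₀ h1]
      nlinarith
    linarith [this, hsub ▸ this]
  have hLpos : 0 ≤ Real.log ((1 + 2 * a) / (1 - 2 * a)) := by
    apply Real.log_nonneg
    rw [le_div_iff₀ h1]; linarith
  rw [hlogneg]
  have key : ((1 - 2 * a) / (2 * B)) * (- Real.log ((1 + 2 * a) / (1 - 2 * a))) +
      ((1 + 2 * a) / (2 * B)) * Real.log ((1 + 2 * a) / (1 - 2 * a)) =
      (2 * a / B) * Real.log ((1 + 2 * a) / (1 - 2 * a)) := by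
    field_simp
    ring
  rw [key, div_mul_eq_mul_div, div_le_div_iff₀ hB hB]
  nlinarith [mul_le_mul_of_nonneg_left hL (by linarith : (0:ℝ) ≤ 2*a), sq_nonneg a, hB.le,
    mul_le_mul_of_nonneg_right (by nlinarith [mul_le_mul_of_nonneg_left hL (by linarith : (0:ℝ) ≤ 2*a)] : 2*a*Real.log ((1 + 2 * a) / (1 - 2 * a)) ≤ 32*a^2) hB.le]
end

section
/- Let ζ > 0 and 0 < ε ≤ 1 with ε < 24ζ. Suppose real numbers μ₀, μ₁, μ₂ ≥ 0 satisfy μ₀ + μ₁ + μ₂ = 1, the constraint (1/2 + ζ)·μ₀ + (1/2 − ζ)·μ₁ + (1/2 − ζ − εζ)·μ₂ ≥ 1/2, and the near-optimality condition (1/2)·μ₁ + (1/2 − εζ)·μ₂ ≥ 1/4 − ε/24. Then μ₁ > 2·μ₂. -/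
/-- Occupancy-measure separation for near-optimal policies in the base hard
instance `M₀`. -/
theorem occupancy_separation (ζ ε : ℝ) (hζ : 0 < ζ) (hε0 : 0 < ε)
    (hε1 : ε ≤ 1) (hεζ : ε < 24 * ζ)
    (μ0 μ1 μ2 : ℝ) (h0 : 0 ≤ μ0) (h1 : 0 ≤ μ1) (h2 : 0 ≤ μ2)
    (hsum : μ0 + μ1 + μ2 = 1)
    (hcon : (1 / 2 + ζ) * μ0 + (1 / 2 - ζ) * μ1 +
        (1 / 2 - ζ - ε * ζ) * μ2 ≥ 1 / 2)
    (hopt : (1 / 2) * μ1 + (1 / 2 - ε * ζ) * μ2 ≥ 1 / 4 - ε / 24) :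
    μ1 > 2 * μ2 := by
  have hζX : 0 ≤ ζ * (μ0 - μ1 - (1 + ε) * μ2) := by nlinarith [hcon, hsum]
  have hA : 0 ≤ μ0 - μ1 - (1 + ε) * μ2 := nonneg_of_mul_nonneg_right hζX hζ
  by_contra hcn
  push_neg at hcn
  have hC1 : 1 - ε / 6 + 4 * ε * ζ * μ2 ≤ 6 * μ2 := by nlinarith [hopt, hcn]
  have hεμ : ε * (μ2 * (1 + 4 * ζ)) ≤ ε * (1 / 6) := by nlinarith [hopt, hA, hsum]
  have hμ2' : μ2 * (6 + 24 * ζ) ≤ 1 := by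
    have := le_of_mul_le_mul_left hεμ hε0
    nlinarith [this]
  have h6 : 0 ≤ 6 - 4 * ε * ζ := by nlinarith [hC1, h2]
  nlinarith [mul_nonneg h6 (by linarith : 0 ≤ 1 - μ2 * (6 + 24 * ζ)),
    mul_nonneg hζ.le (by linarith : 0 ≤ 6 * μ2 - (1 - ε / 6 + 4 * ε * ζ * μ2)),
    hC1]
end
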